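/- Let sce be a finite SCE in which every generic signature name occurring in any constructor is well-formed in sce, every type variable occurring in a constructor is declared in its type-variables component, no naked type variable occurs among the supersignatures of any constructor, and the relation on dom(sce) relating each name nm to the outermost names (heads) of the supersignatures of sce(nm) has no cycles. Then for every ground signature name ggnm well-formed in sce, the set gss(sce, ggnm) of all ground supersignature names of ggnm, obtained by transitively taking direct ground supersignature names, is a finite set. -/

import Mathlib

/-- Type names: either a type variable (from `X`) or a generic signature name,
i.e. a signature constructor name (from `N`) applied to a list of type names. -/
inductive TName (N X : Type) : Type
  | var : X → TName N X
  | gen : N → List (TName N X) → TName N X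

/-- Occurrence of the type variable `y` in a type name. -/
inductive Occurs {N X : Type} (y : X) : TName N X → Prop
  | var : Occurs y (TName.var y)
  | arg {nm : N} {args : List (TName N X)} {t : TName N X} :
      t ∈ args → Occurs y t → Occurs y (TName.gen nm args)

/-- Ground signature names: generic signature names containing no type variables. -/
inductive IsGround {N X : Type} : TName N X → Prop
  | gen {nm : N} {args : List (TName N X)} :
      (∀ t ∈ args, IsGround t) → IsGround (TName.gen nm args)

/-- Occurrence of the signature constructor name `n` (as the head of some
generic signature name) inside a type name. -/
inductive NameOccurs {N X : Type} (n : N) : TName N X → Prop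
  | head {args : List (TName N X)} : NameOccurs n (TName.gen n args)
  | arg {nm : N} {args : List (TName N X)} {t : TName N X} :
      t ∈ args → NameOccurs n t → NameOccurs n (TName.gen nm args)

/-- The outermost name (head) of a type name, if any. -/
def TName.head? {N X : Type} : TName N X → Option N
  | .var _ => none
  | .gen nm _ => some nm

/-- Name substitution `{V̄ ↦ TN̄}`: a type variable in `V` is mapped to the
element of `TN` at the corresponding position, other variables are left
unchanged, and substitution acts homomorphically on generic signature names. -/
def substT {N X : Type} [DecidableEq X] (V : List X) (TN : List (TName N X)) :
    TName N X → TName N X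
  | .var y =>
      match (V.zip TN).lookup y with
      | some t => t
      | none => .var y
  | .gen nm args => .gen nm (args.attach.map fun t => substT V TN t.1)
decreasing_by
  simp_wf
  have := List.sizeOf_lt_of_mem t.2
  omega

/-- A signature constructor: a name, a list of (distinct) type variables,
supersignatures, field signatures and method signatures. -/
structure SigCon (N X L : Type) where
  name : N
  tvars : List X
  supers : List (TName N X)
  fields : List (L × TName N X)
  methods : List (L × List (TName N X) × TName N X)

/-- A signature constructor environment: a (finite) map from names to
signature constructors. -/
abbrev SCE (N X L : Type) := N → Option (SigCon N X L)

/-- Well-formedness of a type name in an SCE: each signature constructor name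
used is bound in the environment and applied to the declared number of type
arguments, recursively. -/
inductive WFT {N X L : Type} (sce : SCE N X L) : TName N X → Prop
  | var (y : X) : WFT sce (TName.var y)
  | gen {nm : N} {args : List (TName N X)} (sc : SigCon N X L) :
      sce nm = some sc → args.length = sc.tvars.length →
      (∀ t ∈ args, WFT sce t) → WFT sce (TName.gen nm args)

/-- The type variable `y` occurs somewhere in the signature constructor `sc`. -/
def OccursInSC {N X L : Type} (y : X) (sc : SigCon N X L) : Prop :=
  (∃ s ∈ sc.supers, Occurs y s) ∨ (∃ f ∈ sc.fields, Occurs y f.2) ∨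
    (∃ m ∈ sc.methods, (∃ a ∈ m.2.1, Occurs y a) ∨ Occurs y m.2.2)

/-- The signature constructor name `n` is referenced somewhere inside `sc`. -/
def NameInSC {N X L : Type} (n : N) (sc : SigCon N X L) : Prop :=
  (∃ s ∈ sc.supers, NameOccurs n s) ∨ (∃ f ∈ sc.fields, NameOccurs n f.2) ∨
    (∃ m ∈ sc.methods, (∃ a ∈ m.2.1, NameOccurs n a) ∨ NameOccurs n m.2.2)

/-- All type names occurring in the components of `sc` are well-formed in `sce`. -/
def WFSC {N X L : Type} (sce : SCE N X L) (sc : SigCon N X L) : Prop :=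
  (∀ s ∈ sc.supers, WFT sce s) ∧ (∀ f ∈ sc.fields, WFT sce f.2) ∧
    (∀ m ∈ sc.methods, (∀ a ∈ m.2.1, WFT sce a) ∧ WFT sce m.2.2)

/-- The "direct supersignature" relation on names induced by an SCE:
`SuperRel sce n m` iff `m` is the head of one of the supersignatures of the
constructor bound to `n`. -/
def SuperRel {N X L : Type} (sce : SCE N X L) (n m : N) : Prop :=
  ∃ sc, sce n = some sc ∧ ∃ s ∈ sc.supers, s.head? = some m

/-- Every member (field or method) a constructor shares (same label) with an
instantiation of one of its supersignature constructors has exactly the same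
signature as in that instantiation. -/
def MemberMatch {N X L : Type} [DecidableEq X] (sce : SCE N X L) : Prop :=
  ∀ n sc, sce n = some sc →
    ∀ (snm : N) (sargs : List (TName N X)), TName.gen snm sargs ∈ sc.supers →
      ∀ ssc, sce snm = some ssc →
        (∀ (l : L) (t t' : TName N X), (l, t) ∈ sc.fields → (l, t') ∈ ssc.fields →
          t = substT ssc.tvars sargs t') ∧
        (∀ (l : L) (as_ : List (TName N X)) (r : TName N X)
            (as' : List (TName N X)) (r' : TName N X),
          (l, as_, r) ∈ sc.methods → (l, as', r') ∈ ssc.methods →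
          as_ = as'.map (substT ssc.tvars sargs) ∧ r = substT ssc.tvars sargs r')

/-- Well-formedness of a signature constructor environment. -/
structure WFSCE {N X L : Type} [DecidableEq X] (sce : SCE N X L) : Prop where
  finite : Set.Finite {n | (sce n).isSome}
  namesMatch : ∀ n sc, sce n = some sc → sc.name = n
  tvarsNodup : ∀ n sc, sce n = some sc → sc.tvars.Nodup
  refsClosed : ∀ n sc, sce n = some sc → ∀ m, NameInSC m sc → (sce m).isSome
  wfNames : ∀ n sc, sce n = some sc → WFSC sce sc
  tvarsDecl : ∀ n sc, sce n = some sc → ∀ y, OccursInSC y sc → y ∈ sc.tvars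
  noNakedSuper : ∀ n sc, sce n = some sc → ∀ s ∈ sc.supers, ∀ y : X, s ≠ TName.var y
  acyclic : ∀ n, ¬ Relation.TransGen (SuperRel sce) n n
  memberMatch : MemberMatch sce

/-- `s` is a direct ground supersignature name of `g` in `sce`. -/
def DirectSuper {N X L : Type} [DecidableEq X] (sce : SCE N X L)
    (g s : TName N X) : Prop :=
  ∃ (nm : N) (args : List (TName N X)) (sc : SigCon N X L),
    g = TName.gen nm args ∧ sce nm = some sc ∧
      ∃ t ∈ sc.supers, s = substT sc.tvars args t

/-- `gss sce g`: the set of all ground supersignature names of `g`, obtained by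
transitively taking direct ground supersignature names. -/
def gss {N X L : Type} [DecidableEq X] (sce : SCE N X L) (g : TName N X) :
    Set (TName N X) :=
  {s | Relation.TransGen (DirectSuper sce) g s}

/-- `SCEExt sce' sce`: the environment `sce'` extends `sce` (as finite maps). -/
def SCEExt {N X L : Type} (sce' sce : SCE N X L) : Prop :=
  ∀ n sc, sce n = some sc → sce' n = some sc

/-- Subsigning of generic object signatures: `Subsign gos2 gos1` (gos2 ⊴ gos1). -/
def Subsign {N X L : Type} [DecidableEq X]
    (gos2 gos1 : TName N X × SCE N X L) : Prop :=
  SCEExt gos2.2 gos1.2 ∧ (gos2.1 = gos1.1 ∨ gos1.1 ∈ gss gos2.2 gos2.1)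

/-- A well-formed generic object signature: a ground signature name
well-formed in a well-formed SCE. -/
def WFGOS {N X L : Type} [DecidableEq X] (gos : TName N X × SCE N X L) : Prop :=
  WFSCE gos.2 ∧ WFT gos.2 gos.1 ∧ IsGround gos.1

/-- A (candidate) ground signature: a quadruple of a name, supersignature
names, field signatures and method signatures (type-name components). -/
structure GSig (N X L : Type) where
  name : TName N X
  supers : List (TName N X)
  fields : List (L × TName N X)
  methods : List (L × List (TName N X) × TName N X)

/-- `gs` is a ground signature: all its components are ground signature names. -/
def GSig.IsGroundSig {N X L : Type} (gs : GSig N X L) : Prop :=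
  IsGround gs.name ∧ (∀ s ∈ gs.supers, IsGround s) ∧
    (∀ f ∈ gs.fields, IsGround f.2) ∧
    (∀ m ∈ gs.methods, (∀ a ∈ m.2.1, IsGround a) ∧ IsGround m.2.2)

/-- `GenToGnd`: instantiating the signature constructor `sc` with the type
arguments `args`, taking `(nm, args)` as the name of the result. -/
def genToGnd {N X L : Type} [DecidableEq X] (nm : N) (args : List (TName N X))
    (sc : SigCon N X L) : GSig N X L where
  name := TName.gen nm args
  supers := sc.supers.map (substT sc.tvars args)
  fields := sc.fields.map fun f => (f.1, substT sc.tvars args f.2)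
  methods := sc.methods.map fun m =>
    (m.1, m.2.1.map (substT sc.tvars args), substT sc.tvars args m.2.2)

/-- The inductively defined set `GGN = N × GGN*` of ground signature names. -/
inductive GGN (N : Type) : Type
  | node : N → List (GGN N) → GGN N

/-- The canonical interpretation of a ground signature name as a generic
signature name. -/
def GGN.toTName {N X : Type} : GGN N → TName N X
  | .node nm args => TName.gen nm (args.attach.map fun a => a.1.toTName)
decreasing_by
  simp_wf
  have := List.sizeOf_lt_of_mem a.2
  omega

/-- The outermost name of a ground signature name (its erasure). -/
def GGN.headName {N : Type} : GGN N → N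
  | .node nm _ => nm

/-- A (non-generic) NOOP signature. -/
structure NSig (N L : Type) where
  name : N
  supers : List N
  fields : List (L × N)
  methods : List (L × List N × N)

/-- A NOOP signature environment. -/
abbrev NEnv (N L : Type) := N → Option (NSig N L)

/-- The name `m` is referenced inside the NOOP signature `s`. -/
def NameInNSig {N L : Type} (m : N) (s : NSig N L) : Prop :=
  m ∈ s.supers ∨ (∃ f ∈ s.fields, f.2 = m) ∨
    (∃ mm ∈ s.methods, m ∈ mm.2.1 ∨ mm.2.2 = m)

/-- The direct supersignature relation on names induced by a NOOP environment. -/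
def NSuperRel {N L : Type} (env : NEnv N L) (n m : N) : Prop :=
  ∃ s, env n = some s ∧ m ∈ s.supers

/-- Well-formedness of a NOOP signature environment. -/
structure WFNEnv {N L : Type} (env : NEnv N L) : Prop where
  finite : Set.Finite {n | (env n).isSome}
  namesMatch : ∀ n s, env n = some s → s.name = n
  refsClosed : ∀ n s, env n = some s → ∀ m, NameInNSig m s → (env m).isSome
  acyclic : ∀ n, ¬ Relation.TransGen (NSuperRel env) n n
  memberMatch : ∀ n s, env n = some s → ∀ m ∈ s.supers, ∀ ss, env m = some ss →
    (∀ (l : L) (t t' : N), (l, t) ∈ s.fields → (l, t') ∈ ss.fields → t = t') ∧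
    (∀ (l : L) (as_ : List N) (r : N) (as' : List N) (r' : N),
      (l, as_, r) ∈ s.methods → (l, as', r') ∈ ss.methods → as_ = as' ∧ r = r')

/-- Erasure of a type name: a naked type variable erases to `Object`, a generic
signature name erases to its outermost name. -/
def eraseT {N X : Type} (Object : N) : TName N X → N
  | .var _ => Object
  | .gen nm _ => nm

/-- Erasure of a signature constructor to a NOOP signature. -/
def eraseSC {N X L : Type} (Object : N) (sc : SigCon N X L) : NSig N L where
  name := sc.name
  supers := sc.supers.map (eraseT Object)
  fields := sc.fields.map fun f => (f.1, eraseT Object f.2)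
  methods := sc.methods.map fun m =>
    (m.1, m.2.1.map (eraseT Object), eraseT Object m.2.2)

/-- Erasure of a signature constructor environment. -/
def eraseSCE {N X L : Type} (Object : N) (sce : SCE N X L) : NEnv N L :=
  fun n => (sce n).map (eraseSC Object)


section Aux

variable {N X L : Type} [DecidableEq X]

lemma lookup_zip_mem : ∀ (V : List X) (TN : List (TName N X)) (y : X)
    (u : TName N X), (V.zip TN).lookup y = some u → u ∈ TN := by
  intro V
  induction V with
  | nil => intro TN y u h; simp [List.lookup] at h
  | cons v V ih =>
    intro TN y u h
    cases TN with
    | nil => simp [List.lookup] at h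
    | cons t TN =>
      simp only [List.zip_cons_cons, List.lookup_cons] at h
      by_cases hy : (y == v) = true
      · simp [hy] at h; simp [h]
      · simp [hy] at h
        exact List.mem_cons_of_mem _ (ih TN y u h)

lemma lookup_zip_isSome : ∀ (V : List X) (TN : List (TName N X)) (y : X),
    y ∈ V → V.length ≤ TN.length → ∃ u, (V.zip TN).lookup y = some u := by
  intro V
  induction V with
  | nil => intro TN y h; simp at h
  | cons v V ih =>
    intro TN y hy hlen
    cases TN with
    | nil => simp at hlen
    | cons t TN =>
      simp only [List.zip_cons_cons, List.lookup_cons]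
      by_cases h : (y == v) = true
      · exact ⟨t, by simp [h]⟩
      · have hy' : y ∈ V := by
          rcases List.mem_cons.mp hy with h1 | h1
          · exact absurd (by simp [h1]) h
          · exact h1
        obtain ⟨u, hu⟩ := ih TN y hy' (by simpa using Nat.le_of_succ_le_succ hlen)
        exact ⟨u, by simp [h, hu]⟩

lemma substT_ground {V : List X} {TN : List (TName N X)}
    (hlen : V.length ≤ TN.length) (hTN : ∀ u ∈ TN, IsGround u) :
    ∀ (t : TName N X), (∀ y, Occurs y t → y ∈ V) → IsGround (substT V TN t) := by
  suffices h : ∀ (n : ℕ) (t : TName N X), sizeOf t ≤ n →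
      (∀ y, Occurs y t → y ∈ V) → IsGround (substT V TN t) by
    intro t; exact h (sizeOf t) t le_rfl
  intro n
  induction n with
  | zero =>
    intro t hs
    exfalso
    cases t <;> simp at hs
  | succ n ih =>
    intro t hs hocc
    cases t with
    | var y =>
      have hy : y ∈ V := hocc y Occurs.var
      obtain ⟨u, hu⟩ := lookup_zip_isSome V TN y hy hlen
      have hum := lookup_zip_mem V TN y u hu
      simp only [substT, hu]
      exact hTN u hum
    | gen nm args =>
      simp only [substT]
      refine IsGround.gen ?_
      intro u hu
      simp only [List.mem_map, List.mem_attach, true_and] at hu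
      obtain ⟨⟨t', ht'⟩, rfl⟩ := hu
      have hsz := List.sizeOf_lt_of_mem ht'
      refine ih t' (by simp at hs; omega) ?_
      intro y hy
      exact hocc y (Occurs.arg ht' hy)

lemma substT_wft {sce : SCE N X L} {V : List X} {TN : List (TName N X)}
    (hTN : ∀ u ∈ TN, WFT sce u) {t : TName N X} (ht : WFT sce t) :
    WFT sce (substT V TN t) := by
  induction ht with
  | var y =>
    simp only [substT]
    cases h : (V.zip TN).lookup y with
    | none => exact WFT.var y
    | some u => exact hTN u (lookup_zip_mem V TN y u h)
  | gen sc hsc hlen hargs ih =>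
    simp only [substT]
    refine WFT.gen sc hsc (by simpa using hlen) ?_
    intro u hu
    simp only [List.mem_map, List.mem_attach, true_and] at hu
    obtain ⟨⟨t', ht'⟩, rfl⟩ := hu
    exact ih t' ht'

end Aux

/-- In a finite SCE in which all occurring generic signature
names are well-formed, all occurring type variables are declared, no naked
type variable occurs among supersignatures, and the supersignature relation on
names has no cycles, the set `gss(sce, ggnm)` of all ground supersignature
names of a well-formed ground signature name `ggnm` is finite. -/
theorem gss_finite {N X L : Type} [DecidableEq X] (sce : SCE N X L)
    (hfin : Set.Finite {n | (sce n).isSome})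
    (hwfn : ∀ n sc, sce n = some sc → WFSC sce sc)
    (htv : ∀ n sc, sce n = some sc → ∀ y : X, OccursInSC y sc → y ∈ sc.tvars)
    (hnk : ∀ n sc, sce n = some sc → ∀ s ∈ sc.supers, ∀ y : X, s ≠ TName.var y)
    (hac : ∀ n, ¬ Relation.TransGen (SuperRel sce) n n)
    (ggnm : TName N X) (hgr : IsGround ggnm) (hwf : WFT sce ggnm) :
    (gss sce ggnm).Finite := by
  classical
  set s0 : Set N := {n | (sce n).isSome} with hs0
  -- a well-founded relation on names
  set r' : N → N → Prop := fun a b =>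
    (Relation.TransGen (SuperRel sce) b a ∧ a ∈ s0) ∧ b ∈ s0 with hr'
  have hwfr : WellFounded r' := by
    have hirr : IsIrrefl N (fun a b => Relation.TransGen (SuperRel sce) b a) :=
      ⟨fun a h => hac a h⟩
    have htr : IsTrans N (fun a b => Relation.TransGen (SuperRel sce) b a) :=
      ⟨fun a b c h1 h2 => Relation.TransGen.trans h2 h1⟩
    have hso : IsStrictOrder N (fun a b => Relation.TransGen (SuperRel sce) b a) :=
      { toIrrefl := ⟨fun a h => hac a h⟩, toIsTrans := htr }
    have := hfin.wellFoundedOn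
      (r := fun a b => Relation.TransGen (SuperRel sce) b a)
    rw [Set.wellFoundedOn_iff] at this
    exact this.mono (fun a b hab => ⟨hab.1.1, hab.1.2, hab.2⟩)
  have key : ∀ nm : N, ∀ (args : List (TName N X)),
      IsGround (TName.gen nm args) → WFT sce (TName.gen nm args) →
      (gss sce (TName.gen nm args)).Finite := by
    intro nm
    induction (hwfr.apply nm) with
    | intro nm _ ihacc =>
      intro args hg hw
      obtain ⟨sc, hsc, hlen, hargsw⟩ :
          ∃ sc, sce nm = some sc ∧ args.length = sc.tvars.length ∧
            ∀ t ∈ args, WFT sce t := by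
        cases hw with
        | gen sc h1 h2 h3 => exact ⟨sc, h1, h2, h3⟩
      have hargsg : ∀ t ∈ args, IsGround t := by
        cases hg with | gen h => exact h
      set Dlist : List (TName N X) := sc.supers.map (substT sc.tvars args)
        with hDlist
      -- every direct super of our node is in Dlist
      have hD : ∀ s, DirectSuper sce (TName.gen nm args) s → s ∈ Dlist := by
        intro s hds
        obtain ⟨nm', args', sc', heq, hsc', t, htmem, hts⟩ := hds
        obtain ⟨rfl, rfl⟩ : nm' = nm ∧ args' = args := by
          cases heq; exact ⟨rfl, rfl⟩
        rw [hsc] at hsc'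
        obtain rfl : sc' = sc := by injection hsc'.symm
        exact List.mem_map.mpr ⟨t, htmem, hts.symm⟩
      -- each element of Dlist has a finite gss
      have hsup : ∀ s ∈ Dlist, (gss sce s).Finite := by
        intro s hsmem
        obtain ⟨t, htmem, hts⟩ := List.mem_map.mp hsmem
        -- t is not a naked variable
        obtain ⟨snm, targs, rfl⟩ : ∃ snm targs, t = TName.gen snm targs := by
          cases t with
          | var y => exact absurd rfl (hnk nm sc hsc _ htmem y)
          | gen snm targs => exact ⟨snm, targs, rfl⟩
        -- s is ground
        have hlen' : sc.tvars.length ≤ args.length := le_of_eq hlen.symm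
        have hsg : IsGround s := by
          rw [← hts]
          refine substT_ground hlen' hargsg _ ?_
          intro y hy
          exact htv nm sc hsc y (Or.inl ⟨_, htmem, hy⟩)
        -- s is well-formed
        have hsw : WFT sce s := by
          rw [← hts]
          exact substT_wft hargsw ((hwfn nm sc hsc).1 _ htmem)
        -- the shape of s
        have hshape : ∃ sargs, s = TName.gen snm sargs := by
          rw [← hts]
          simp only [substT]
          exact ⟨_, rfl⟩
        obtain ⟨sargs, rfl⟩ := hshape
        -- snm is in the domain
        have hsnm : snm ∈ s0 := by
          cases hsw with
          | gen ssc h1 _ _ => simp [hs0, Set.mem_setOf_eq, h1]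
        have hrel : r' snm nm := by
          refine ⟨⟨Relation.TransGen.single ?_, hsnm⟩, by simp [hs0, hsc]⟩
          refine ⟨sc, hsc, TName.gen snm targs, htmem, rfl⟩
        exact ihacc snm hrel sargs hsg hsw
      -- gss is contained in a finite union
      have hsubset : gss sce (TName.gen nm args) ⊆
          {s | s ∈ Dlist} ∪ ⋃ s ∈ {s | s ∈ Dlist}, gss sce s := by
        intro x hx
        have hx' : Relation.TransGen (DirectSuper sce) (TName.gen nm args) x := hx
        obtain ⟨b, hb, hbx⟩ := Relation.TransGen.head'_iff.mp hx'
        rcases Relation.reflTransGen_iff_eq_or_transGen.mp hbx with rfl | hbx'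
        · exact Or.inl (hD x hb)
        · exact Or.inr (Set.mem_biUnion (hD b hb) hbx')
      refine Set.Finite.subset ?_ hsubset
      exact (Dlist.finite_toSet).union
        (Set.Finite.biUnion Dlist.finite_toSet hsup)
  cases hgr with
  | @gen nm args h =>
    exact key nm args (IsGround.gen h) hwf
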